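/- If g : F_q^d → Ω is scalar respecting (i.e., g(j·α) = g(α)^j for all j ∈ F_q and α ∈ F_q^d), then every Fourier coefficient ĝ(ρ) := E_{α}[g(α)·conj(χ_ρ(α))] is a real number, where χ_ρ(α) = ω^{ρ·α}. -/
import Mathlib

open scoped Classical
open Finset Complex

noncomputable def omegaC (q : ℕ) : ℂ := Complex.exp (2 * Real.pi * Complex.I / q)

noncomputable def chiC (q d : ℕ) (ρ α : Fin d → ZMod q) : ℂ :=
  omegaC q ^ (∑ i, ρ i * α i).val

noncomputable def hatC (q d : ℕ) [NeZero q] (g : (Fin d → ZMod q) → ℂ)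
    (ρ : Fin d → ZMod q) : ℂ :=
  (∑ α : Fin d → ZMod q, g α * (starRingEnd ℂ) (chiC q d ρ α)) / (q : ℂ) ^ d

lemma omegaC_pow_q (q : ℕ) (hq : q ≠ 0) : omegaC q ^ q = 1 := by
  rw [omegaC, ← Complex.exp_nat_mul]
  rw [mul_div_cancel₀]
  · exact Complex.exp_two_pi_mul_I
  · exact_mod_cast hq

lemma omegaC_conj (q : ℕ) (hq : q ≠ 0) (m : ℕ) :
    (starRingEnd ℂ) (omegaC q ^ m) = omegaC q ^ ((q-1)*m) := by
  have h1 : (starRingEnd ℂ) (omegaC q) = omegaC q ^ (q-1) := by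
    have : omegaC q ^ (q-1) * omegaC q = 1 := by
      rw [← pow_succ, Nat.sub_add_cancel (Nat.one_le_iff_ne_zero.2 hq), omegaC_pow_q q hq]
    have hinv : omegaC q ^ (q-1) = (omegaC q)⁻¹ := eq_inv_of_mul_eq_one_left this
    rw [hinv, omegaC, ← Complex.exp_conj, ← Complex.exp_neg]
    congr 1
    rw [map_div₀]
    simp [Complex.conj_I, map_mul, map_ofNat]
    ring
  rw [map_pow, h1, ← pow_mul, mul_comm]

lemma omegaC_congr (q : ℕ) (hq : q ≠ 0) (a b : ℕ) (h : (a : ZMod q) = b) :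
    omegaC q ^ a = omegaC q ^ b := by
  have := (ZMod.natCast_eq_natCast_iff a b q).1 h
  rw [pow_eq_pow_mod a (omegaC_pow_q q hq), pow_eq_pow_mod b (omegaC_pow_q q hq), this]

theorem stmt_1 (q d : ℕ) [Fact q.Prime]
    (g : (Fin d → ZMod q) → ℂ)
    (hΩ : ∀ α, ∃ k : ℕ, g α = omegaC q ^ k)
    (hscal : ∀ (j : ZMod q) (α : Fin d → ZMod q), g (j • α) = g α ^ j.val)
    (ρ : Fin d → ZMod q) :
    (hatC q d g ρ).im = 0 := by
  have hq : q ≠ 0 := (Fact.out : q.Prime).ne_zero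
  have hq1 : 1 ≤ q := Nat.one_le_iff_ne_zero.2 hq
  have key : ∀ α : Fin d → ZMod q,
      (starRingEnd ℂ) (g α) * chiC q d ρ α
        = g (-α) * (starRingEnd ℂ) (chiC q d ρ (-α)) := by
    intro α
    obtain ⟨k, hk⟩ := hΩ α
    have hneg : g (-α) = omegaC q ^ (k * (-1 : ZMod q).val) := by
      have := hscal (-1) α
      rw [neg_one_smul] at this
      rw [this, hk, ← pow_mul]
    have hsum : (∑ i, ρ i * (-α) i) = -(∑ i, ρ i * α i) := by
      simp [mul_neg]
    set s : ZMod q := ∑ i, ρ i * α i with hs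
    have hχ : chiC q d ρ α = omegaC q ^ s.val := rfl
    have hχn : chiC q d ρ (-α) = omegaC q ^ (-s).val := by
      rw [chiC, hsum]
    rw [hk, hχ, hχn, hneg, omegaC_conj q hq, omegaC_conj q hq, ← pow_add, ← pow_add]
    apply omegaC_congr q hq
    push_cast [Nat.cast_sub hq1]
    simp only [ZMod.natCast_val, ZMod.cast_id, ZMod.natCast_self]
    ring
  rw [← Complex.conj_eq_iff_im, hatC, map_div₀, map_sum]
  congr 1
  · calc ∑ α : Fin d → ZMod q, (starRingEnd ℂ) (g α * (starRingEnd ℂ) (chiC q d ρ α))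
        = ∑ α : Fin d → ZMod q, (starRingEnd ℂ) (g α) * chiC q d ρ α := by
          simp only [map_mul, Complex.conj_conj]
      _ = ∑ α : Fin d → ZMod q, g α * (starRingEnd ℂ) (chiC q d ρ α) := by
          refine Fintype.sum_equiv (Equiv.neg _) _ _ fun α => ?_
          simpa using key α
  · simp
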